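/- The map q ↦ div div(x x^T q) is a bijection from homogeneous polynomials of degree k−1 to homogeneous polynomials of degree k−1; in fact div div(x x^T q) = (k+d)(k+d−1)q for q ∈ ℍ_{k−1}. Consequently div div : ℙ_{k+1}(ℝ^d; 𝕊) → ℙ_{k−1}(ℝ^d) is surjective. -/
import Mathlib

open MvPolynomial Finset

lemma mono_step {d : ℕ} (u : Fin d →₀ ℕ) (c : ℝ) (i j : Fin d) :
    pderiv i (pderiv j (X i * X j * monomial u c)) =
      monomial u (c * (((u j : ℝ) + if i = j then 2 else 1) * ((u i : ℝ) + 1))) := by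
  classical
  have h1 : X i * X j * monomial u c
      = monomial (Finsupp.single i 1 + Finsupp.single j 1 + u) c := by
    rw [X, X, monomial_mul, monomial_mul, one_mul, one_mul]
  rw [h1, pderiv_monomial]
  have h2 : Finsupp.single i 1 + Finsupp.single j 1 + u - Finsupp.single j 1
      = Finsupp.single i 1 + u := by
    ext a
    simp only [Finsupp.tsub_apply, Finsupp.add_apply, Finsupp.single_apply]
    split_ifs <;> omega
  rw [h2, pderiv_monomial]
  have h3 : Finsupp.single i 1 + u - Finsupp.single i 1 = u := by
    ext a
    simp only [Finsupp.tsub_apply, Finsupp.add_apply, Finsupp.single_apply]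
    split_ifs <;> omega
  rw [h3]
  congr 1
  simp only [Finsupp.add_apply, Finsupp.single_apply, if_pos rfl]
  split_ifs <;> push_cast <;> ring

lemma mono_sum {d : ℕ} (u : Fin d →₀ ℕ) (c : ℝ) (m : ℕ) (hu : ∑ j, u j = m) :
    ∑ i : Fin d, ∑ j : Fin d, pderiv i (pderiv j (X i * X j * monomial u c)) =
      monomial u ((((m + d) * (m + d + 1) : ℕ) : ℝ) * c) := by
  simp only [mono_step]
  simp only [← map_sum]
  congr 1
  have hM : ∑ j : Fin d, (u j : ℝ) = (m : ℝ) := by exact_mod_cast congrArg (Nat.cast : ℕ → ℝ) hu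
  have h2 : ∀ i : Fin d, ∑ j : Fin d, ((u j : ℝ) + if i = j then 2 else 1) = (m : ℝ) + d + 1 := by
    intro i
    have h3 : ∀ j : Fin d, ((u j : ℝ) + if i = j then 2 else 1)
        = ((u j : ℝ) + 1) + (if i = j then 1 else 0) := by
      intro j; split_ifs <;> ring
    simp only [h3]
    rw [Finset.sum_add_distrib, Finset.sum_add_distrib, hM, Finset.sum_const, Finset.sum_ite_eq]
    simp
  have step1 : ∀ i : Fin d, ∑ j : Fin d,
      c * (((u j : ℝ) + if i = j then 2 else 1) * ((u i : ℝ) + 1))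
      = c * ((u i : ℝ) + 1) * ((m : ℝ) + d + 1) := by
    intro i
    rw [← h2 i, Finset.mul_sum]
    exact Finset.sum_congr rfl fun j _ => by ring
  simp only [step1]
  rw [← Finset.sum_mul, ← Finset.mul_sum, Finset.sum_add_distrib, hM, Finset.sum_const]
  rw [Finset.card_univ, Fintype.card_fin]
  push_cast
  ring

lemma key_divdiv {d m : ℕ} (q : MvPolynomial (Fin d) ℝ) (hq : q.IsHomogeneous m) :
    ∑ i : Fin d, ∑ j : Fin d, pderiv i (pderiv j (X i * X j * q)) =
      (((m + d) * (m + d + 1) : ℕ) : MvPolynomial (Fin d) ℝ) * q := by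
  conv_lhs => rw [q.as_sum]
  conv_rhs => rw [q.as_sum]
  rw [← C_eq_coe_nat, Finset.mul_sum]
  simp only [Finset.mul_sum, map_sum, C_mul_monomial]
  have hswap : ∀ i : Fin d, ∑ j : Fin d, ∑ v ∈ q.support,
      pderiv i (pderiv j (X i * X j * monomial v (coeff v q)))
      = ∑ v ∈ q.support, ∑ j : Fin d, pderiv i (pderiv j (X i * X j * monomial v (coeff v q))) :=
    fun i => Finset.sum_comm
  simp only [hswap]
  rw [Finset.sum_comm]
  refine Finset.sum_congr rfl fun v hv => ?_
  have hdeg : ∑ j : Fin d, v j = m := by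
    have := hq (mem_support_iff.mp hv)
    rw [Finsupp.weight_apply] at this
    rw [← this]
    rw [Finsupp.sum]
    rw [Finset.sum_subset (Finset.subset_univ v.support)]
    · exact Finset.sum_congr rfl fun j _ => by simp
    · intro x _ hx
      simp [Finsupp.notMem_support_iff.mp hx]
  rw [mono_sum v _ m hdeg]

/-- `div div (x xᵀ q) = (k+d)(k+d−1) q` for `q ∈ ℍ_{k−1}`; the map
`q ↦ div div (x xᵀ q)` is a bijection of `ℍ_{k−1}` onto itself; consequently
`div div : ℙ_{k+1}(ℝ^d; 𝕊) → ℙ_{k−1}(ℝ^d)` is surjective. -/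
theorem stmt_13 (d k : ℕ) (hd : 1 ≤ d) (hk : 1 ≤ k) :
    (∀ q : MvPolynomial (Fin d) ℝ, q.IsHomogeneous (k - 1) →
      ∑ i : Fin d, ∑ j : Fin d, pderiv i (pderiv j (X i * X j * q)) =
        (((k + d) * (k + d - 1) : ℕ) : MvPolynomial (Fin d) ℝ) * q) ∧
    Set.BijOn
      (fun q : MvPolynomial (Fin d) ℝ =>
        ∑ i : Fin d, ∑ j : Fin d, pderiv i (pderiv j (X i * X j * q)))
      {q : MvPolynomial (Fin d) ℝ | q.IsHomogeneous (k - 1)}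
      {q : MvPolynomial (Fin d) ℝ | q.IsHomogeneous (k - 1)} ∧
    (∀ p : MvPolynomial (Fin d) ℝ, p.totalDegree ≤ k - 1 →
      ∃ τ : Fin d → Fin d → MvPolynomial (Fin d) ℝ,
        (∀ i j, (τ i j).totalDegree ≤ k + 1) ∧ (∀ i j, τ i j = τ j i) ∧
        ∑ i : Fin d, ∑ j : Fin d, pderiv i (pderiv j (τ i j)) = p) := by
  have hc : (k + d) * (k + d - 1) = ((k - 1) + d) * ((k - 1) + d + 1) := by
    have h1 : k + d - 1 = (k - 1) + d := by omega
    have h2 : k + d = (k - 1) + d + 1 := by omega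
    rw [h1, h2]; ring
  have part1 : ∀ q : MvPolynomial (Fin d) ℝ, q.IsHomogeneous (k - 1) →
      ∑ i : Fin d, ∑ j : Fin d, pderiv i (pderiv j (X i * X j * q)) =
        (((k + d) * (k + d - 1) : ℕ) : MvPolynomial (Fin d) ℝ) * q := by
    intro q hq
    rw [key_divdiv q hq, hc]
  set N : ℕ := (k + d) * (k + d - 1) with hNdef
  have hNpos : 0 < N := Nat.mul_pos (by omega) (by omega)
  have hNR : (N : ℝ) ≠ 0 := Nat.cast_ne_zero.mpr hNpos.ne'
  have hhomC : ∀ (a : ℝ) (q : MvPolynomial (Fin d) ℝ), q.IsHomogeneous (k - 1) →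
      (C a * q).IsHomogeneous (k - 1) := by
    intro a q hq
    have := (isHomogeneous_C (Fin d) a).mul hq
    rwa [zero_add] at this
  refine ⟨part1, ⟨?_, ?_, ?_⟩, ?_⟩
  · -- MapsTo
    intro q hq
    simp only [Set.mem_setOf_eq] at *
    rw [part1 q hq, ← C_eq_coe_nat]
    exact hhomC _ q hq
  · -- InjOn
    intro q1 h1 q2 h2 heq
    simp only [Set.mem_setOf_eq] at h1 h2
    simp only [part1 q1 h1, part1 q2 h2] at heq
    have hne : ((N : ℕ) : MvPolynomial (Fin d) ℝ) ≠ 0 := by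
      rw [← C_eq_coe_nat]
      simpa using hNR
    exact mul_left_cancel₀ hne heq
  · -- SurjOn
    intro p hp
    simp only [Set.mem_setOf_eq] at hp
    refine ⟨C ((N : ℝ))⁻¹ * p, hhomC _ p hp, ?_⟩
    simp only
    rw [part1 _ (hhomC _ p hp), ← C_eq_coe_nat, ← mul_assoc, ← C_mul,
      mul_inv_cancel₀ hNR, C_1, one_mul]
  · -- surjectivity of div div
    intro p hp
    refine ⟨fun i j => ∑ m ∈ range k,
      C ((((m + d) * (m + d + 1) : ℕ) : ℝ))⁻¹ * (X i * X j * homogeneousComponent m p),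
      ?_, ?_, ?_⟩
    · intro i j
      refine le_trans (totalDegree_finset_sum _ _) ?_
      refine Finset.sup_le fun m hm => ?_
      have hm' : m < k := Finset.mem_range.mp hm
      have hXX : (X i * X j * homogeneousComponent m p).totalDegree ≤ 2 + m := by
        refine le_trans (totalDegree_mul _ _) ?_
        have h2 : (X i * X j : MvPolynomial (Fin d) ℝ).totalDegree ≤ 2 := by
          refine le_trans (totalDegree_mul _ _) ?_
          simp [totalDegree_X]
        exact add_le_add h2 ((homogeneousComponent_isHomogeneous m p).totalDegree_le)
      refine le_trans (totalDegree_mul _ _) ?_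
      rw [totalDegree_C, zero_add]
      exact le_trans hXX (by omega)
    · intro i j
      exact Finset.sum_congr rfl fun m _ => by ring
    · simp only [map_sum, pderiv_C_mul]
      have hswap : ∀ i : Fin d, (∑ j : Fin d, ∑ m ∈ range k,
          C ((((m + d) * (m + d + 1) : ℕ) : ℝ))⁻¹ *
            pderiv i (pderiv j (X i * X j * homogeneousComponent m p)))
          = ∑ m ∈ range k, ∑ j : Fin d,
          C ((((m + d) * (m + d + 1) : ℕ) : ℝ))⁻¹ *
            pderiv i (pderiv j (X i * X j * homogeneousComponent m p)) :=
        fun i => Finset.sum_comm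
      simp only [hswap]
      rw [Finset.sum_comm]
      have hterm : ∀ m ∈ range k, (∑ i : Fin d, ∑ j : Fin d,
          C ((((m + d) * (m + d + 1) : ℕ) : ℝ))⁻¹ *
            pderiv i (pderiv j (X i * X j * homogeneousComponent m p)))
          = homogeneousComponent m p := by
        intro m _
        have hcm : (((m + d) * (m + d + 1) : ℕ) : ℝ) ≠ 0 :=
          Nat.cast_ne_zero.mpr (Nat.mul_pos (by omega) (by omega)).ne'
        rw [show (∑ i : Fin d, ∑ j : Fin d,
            C ((((m + d) * (m + d + 1) : ℕ) : ℝ))⁻¹ *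
              pderiv i (pderiv j (X i * X j * homogeneousComponent m p)))
            = C ((((m + d) * (m + d + 1) : ℕ) : ℝ))⁻¹ * ∑ i : Fin d, ∑ j : Fin d,
              pderiv i (pderiv j (X i * X j * homogeneousComponent m p)) by
          rw [Finset.mul_sum]
          exact Finset.sum_congr rfl fun i _ => by rw [Finset.mul_sum]]
        rw [key_divdiv _ (homogeneousComponent_isHomogeneous m p), ← C_eq_coe_nat,
          ← mul_assoc, ← C_mul, inv_mul_cancel₀ hcm, C_1, one_mul]
      rw [Finset.sum_congr rfl hterm]
      rw [← Finset.sum_subset (Finset.range_subset_range.mpr (by omega : p.totalDegree + 1 ≤ k))]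
      · exact sum_homogeneousComponent p
      · intro m _ hm
        exact homogeneousComponent_eq_zero m p (by simpa using Finset.mem_range.not.mp hm)
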